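/- If $(\Omega,\mathcal{F},P,T)$ is a measure-preserving ergodic system and $g, g_0, g_1, g_2, \ldots$ are integrable random variables with $g_t \to g$ in $L^1(P)$, then the Cesàro averages $\frac{1}{n}\sum_{t=0}^{n-1} g_t \circ T^t$ converge to $E\{g\}$ in $L^1(P)$ as $n \to \infty$. -/

import Mathlib

open MeasureTheory Filter Finset Function
open scoped ENNReal Topology

section MeanErgodicAux
variable {Ω : Type*} [MeasurableSpace Ω] {μ : Measure Ω} {T : Ω → Ω}

variable {Ω : Type*} [MeasurableSpace Ω] {μ : Measure Ω} {T : Ω → Ω}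

lemma my_integral_comp_iterate (hTm : MeasurePreserving T μ μ) (u : Ω → ℝ)
    (hu : AEStronglyMeasurable u μ) (t : ℕ) :
    ∫ ω, u (T^[t] ω) ∂μ = ∫ ω, u ω ∂μ := by
  have h := hTm.iterate t
  conv_rhs => rw [← h.map_eq]
  rw [integral_map h.measurable.aemeasurable (by rwa [h.map_eq])]

lemma my_integrable_comp_iterate (hTm : MeasurePreserving T μ μ) {u : Ω → ℝ}
    (hu : Integrable u μ) (t : ℕ) :
    Integrable (fun ω => u (T^[t] ω)) μ :=
  memLp_one_iff_integrable.1
    ((memLp_one_iff_integrable.2 hu).comp_measurePreserving (hTm.iterate t))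

lemma my_avg_bound_family (hTm : MeasurePreserving T μ μ) (u : ℕ → Ω → ℝ)
    (hu : ∀ t, Integrable (u t) μ) (n : ℕ) :
    ∫ ω, |(1/(n:ℝ)) * ∑ t ∈ range n, u t (T^[t] ω)| ∂μ
      ≤ (1/(n:ℝ)) * ∑ t ∈ range n, ∫ ω, |u t ω| ∂μ := by
  have hint : ∀ t, Integrable (fun ω => u t (T^[t] ω)) μ :=
    fun t => my_integrable_comp_iterate hTm (hu t) t
  have h1 : ∫ ω, |(1/(n:ℝ)) * ∑ t ∈ range n, u t (T^[t] ω)| ∂μ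
      ≤ ∫ ω, (1/(n:ℝ)) * ∑ t ∈ range n, |u t (T^[t] ω)| ∂μ := by
    refine integral_mono ((integrable_finset_sum _ fun t _ => hint t).const_mul _).abs
      ((integrable_finset_sum _ fun t _ => (hint t).abs).const_mul _) (fun ω => ?_)
    rw [abs_mul, abs_of_nonneg (by positivity : (0:ℝ) ≤ 1/(n:ℝ))]
    exact mul_le_mul_of_nonneg_left (Finset.abs_sum_le_sum_abs _ _) (by positivity)
  refine h1.trans (le_of_eq ?_)
  rw [integral_const_mul, integral_finset_sum _ (fun t _ => (hint t).abs)]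
  congr 1
  refine Finset.sum_congr rfl fun t _ => ?_
  exact my_integral_comp_iterate hTm (fun ω => |u t ω|) (hu t).abs.aestronglyMeasurable t

lemma my_avg_bound (hTm : MeasurePreserving T μ μ) (u : Ω → ℝ)
    (hu : Integrable u μ) (n : ℕ) :
    ∫ ω, |(1/(n:ℝ)) * ∑ t ∈ range n, u (T^[t] ω)| ∂μ ≤ ∫ ω, |u ω| ∂μ := by
  refine (my_avg_bound_family hTm (fun _ => u) (fun _ => hu) n).trans ?_
  rw [Finset.sum_const, card_range, nsmul_eq_mul]
  rcases Nat.eq_zero_or_pos n with h | h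
  · simp [h]
    exact integral_nonneg fun ω => abs_nonneg _
  · rw [one_div, ← mul_assoc, inv_mul_cancel₀ (Nat.cast_ne_zero.2 h.ne'), one_mul]

lemma my_l1_le_norm [IsProbabilityMeasure μ] (D : Lp ℝ 2 μ) :
    ∫ ω, |D ω| ∂μ ≤ ‖D‖ := by
  have h1 : ∫ ω, |D ω| ∂μ = (eLpNorm (⇑D) 1 μ).toReal := by
    simp_rw [← Real.norm_eq_abs]
    rw [integral_norm_eq_lintegral_enorm (Lp.aestronglyMeasurable D),
      eLpNorm_one_eq_lintegral_enorm]
  rw [h1, Lp.norm_def]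
  exact ENNReal.toReal_mono (Lp.eLpNorm_ne_top D)
    (eLpNorm_le_eLpNorm_of_exponent_le (by norm_num) (Lp.aestronglyMeasurable D))


variable {Ω : Type*} [MeasurableSpace Ω] {μ : Measure Ω} {T : Ω → Ω}

lemma my_coeFn_sum_lp {ι : Type*} (s : Finset ι) (F : ι → Lp ℝ 2 μ) :
    ⇑(∑ i ∈ s, F i) =ᵐ[μ] fun ω => ∑ i ∈ s, F i ω := by
  classical
  induction s using Finset.induction with
  | empty => rw [Finset.sum_empty]; exact Lp.coeFn_zero ℝ 2 μ
  | insert _ _ hx ih =>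
    rw [Finset.sum_insert hx]
    refine (Lp.coeFn_add _ _).trans ?_
    filter_upwards [ih] with ω hω
    rw [Pi.add_apply, hω, Finset.sum_insert hx]

lemma my_coeFn_iterate [IsProbabilityMeasure μ] (hTm : MeasurePreserving T μ μ)
    (v : Lp ℝ 2 μ) (t : ℕ) :
    ⇑((⇑((Lp.compMeasurePreservingₗᵢ (E := ℝ) (p := 2) ℝ T hTm).toContinuousLinearMap))^[t] v)
      =ᵐ[μ] fun ω => v (T^[t] ω) := by
  induction t with
  | zero => simp
  | succ t ih =>
    rw [Function.iterate_succ_apply']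
    have h1 : ⇑((Lp.compMeasurePreservingₗᵢ (E := ℝ) (p := 2) ℝ T hTm).toContinuousLinearMap
        ((⇑((Lp.compMeasurePreservingₗᵢ (E := ℝ) (p := 2) ℝ T hTm).toContinuousLinearMap))^[t] v))
        =ᵐ[μ] ⇑((⇑((Lp.compMeasurePreservingₗᵢ (E := ℝ) (p := 2) ℝ T hTm).toContinuousLinearMap))^[t] v) ∘ T :=
      Lp.coeFn_compMeasurePreserving _ hTm
    have h2 := ih.comp_tendsto hTm.quasiMeasurePreserving.tendsto_ae
    refine h1.trans (h2.trans ?_)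
    filter_upwards with ω
    simp [Function.comp, Function.iterate_succ_apply]

lemma my_integral_comp_iterate' (hTm : MeasurePreserving T μ μ) (u : Ω → ℝ)
    (hu : AEStronglyMeasurable u μ) (t : ℕ) :
    ∫ ω, u (T^[t] ω) ∂μ = ∫ ω, u ω ∂μ := by
  have h := hTm.iterate t
  conv_rhs => rw [← h.map_eq]
  rw [integral_map h.measurable.aemeasurable (by rwa [h.map_eq])]

lemma my_integrable_comp_iterate' (hTm : MeasurePreserving T μ μ) {u : Ω → ℝ}
    (hu : Integrable u μ) (t : ℕ) :
    Integrable (fun ω => u (T^[t] ω)) μ :=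
  memLp_one_iff_integrable.1
    ((memLp_one_iff_integrable.2 hu).comp_measurePreserving (hTm.iterate t))

set_option maxHeartbeats 1000000 in
set_option synthInstance.maxHeartbeats 400000 in
lemma my_meanErgodic_L2 [IsProbabilityMeasure μ] (hT : Ergodic T μ) (g : Ω → ℝ)
    (hg2 : MemLp g 2 μ) :
    Tendsto (fun n : ℕ => ∫ ω, |(1/(n:ℝ)) * ∑ t ∈ range n, g (T^[t] ω) - ∫ x, g x ∂μ| ∂μ)
      atTop (𝓝 0) := by
  have hTm := hT.toMeasurePreserving
  set U := (Lp.compMeasurePreservingₗᵢ (E := ℝ) (p := 2) ℝ T hTm).toContinuousLinearMap with hUdef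
  have hUnorm : ‖U‖ ≤ 1 := LinearIsometry.norm_toContinuousLinearMap_le _
  set f := hg2.toLp g with hfdef
  obtain ⟨L, hLmem, hLtendsto⟩ : ∃ L : Lp ℝ 2 μ, U L = L ∧
      Tendsto (birkhoffAverage ℝ (⇑U) _root_.id · f) atTop (𝓝 L) := by
    refine ⟨_, ?_, U.tendsto_birkhoffAverage_orthogonalProjection hUnorm f⟩
    have h := (Submodule.orthogonalProjectionOnto (LinearMap.eqLocus (U : Lp ℝ 2 μ →ₗ[ℝ] Lp ℝ 2 μ) ((1 : Lp ℝ 2 μ →L[ℝ] Lp ℝ 2 μ) : Lp ℝ 2 μ →ₗ[ℝ] Lp ℝ 2 μ)) f).2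
    rw [LinearMap.mem_eqLocus] at h
    simpa using h
  have hcomp : ⇑L ∘ T =ᵐ[μ] ⇑L := by
    have h1 : ⇑(U L) =ᵐ[μ] ⇑L ∘ T := Lp.coeFn_compMeasurePreserving L hTm
    rw [hLmem] at h1
    exact h1.symm
  obtain ⟨c, hc⟩ := hT.ae_eq_const_of_ae_eq_comp_ae (Lp.aestronglyMeasurable L) hcomp
  -- identify the Birkhoff average as a function
  have hback : ∀ n : ℕ, ⇑(birkhoffAverage ℝ (⇑U) _root_.id n f)
      =ᵐ[μ] fun ω => (1/(n:ℝ)) * ∑ t ∈ range n, g (T^[t] ω) := by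
    intro n
    have hsum : ⇑(birkhoffSum (⇑U) _root_.id n f)
        =ᵐ[μ] fun ω => ∑ t ∈ range n, g (T^[t] ω) := by
      unfold birkhoffSum
      refine (my_coeFn_sum_lp _ _).trans ?_
      have hterm : ∀ t : ℕ, ⇑((⇑U)^[t] f) =ᵐ[μ] fun ω => g (T^[t] ω) := by
        intro t
        refine (my_coeFn_iterate hTm f t).trans ?_
        have := (MemLp.coeFn_toLp hg2).comp_tendsto (hTm.iterate t).quasiMeasurePreserving.tendsto_ae
        exact this
      have : ∀ᵐ ω ∂μ, ∀ t ∈ range n, ((⇑U)^[t] f) ω = g (T^[t] ω) :=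
        (ae_ball_iff (Finset.countable_toSet _)).2 fun t _ => hterm t
      filter_upwards [this] with ω hω
      exact Finset.sum_congr rfl fun t ht => hω t ht
    have hsmul := Lp.coeFn_smul ((n:ℝ)⁻¹) (birkhoffSum (⇑U) _root_.id n f)
    have hmain : ⇑((n:ℝ)⁻¹ • birkhoffSum (⇑U) _root_.id n f)
        =ᵐ[μ] fun ω => (1/(n:ℝ)) * ∑ t ∈ range n, g (T^[t] ω) := by
      refine hsmul.trans ?_
      filter_upwards [hsum] with ω hω
      rw [Pi.smul_apply, smul_eq_mul, hω, one_div]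
    simpa [birkhoffAverage] using hmain
  have hbound : ∀ n : ℕ, ∫ ω, |(1/(n:ℝ)) * ∑ t ∈ range n, g (T^[t] ω) - c| ∂μ
      ≤ ‖birkhoffAverage ℝ (⇑U) _root_.id n f - L‖ := by
    intro n
    have hae : ⇑(birkhoffAverage ℝ (⇑U) _root_.id n f - L)
        =ᵐ[μ] fun ω => (1/(n:ℝ)) * ∑ t ∈ range n, g (T^[t] ω) - c := by
      refine (Lp.coeFn_sub _ _).trans ?_
      filter_upwards [hback n, hc] with ω h1 h2
      simp [h1, h2]
    calc ∫ ω, |(1/(n:ℝ)) * ∑ t ∈ range n, g (T^[t] ω) - c| ∂μ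
        = ∫ ω, |(birkhoffAverage ℝ (⇑U) _root_.id n f - L) ω| ∂μ := by
          refine integral_congr_ae ?_
          filter_upwards [hae] with ω hω
          rw [hω]
      _ ≤ ‖birkhoffAverage ℝ (⇑U) _root_.id n f - L‖ := my_l1_le_norm _
  have hnorm0 : Tendsto (fun n => ‖birkhoffAverage ℝ (⇑U) _root_.id n f - L‖) atTop (𝓝 0) :=
    tendsto_iff_norm_sub_tendsto_zero.1 hLtendsto
  have hIc : Tendsto (fun n : ℕ => ∫ ω, |(1/(n:ℝ)) * ∑ t ∈ range n, g (T^[t] ω) - c| ∂μ)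
      atTop (𝓝 0) :=
    squeeze_zero (fun n => integral_nonneg fun ω => abs_nonneg _) hbound hnorm0
  have hg1 : Integrable g μ := hg2.integrable one_le_two
  have hAint : ∀ n : ℕ, Integrable (fun ω => (1/(n:ℝ)) * ∑ t ∈ range n, g (T^[t] ω)) μ :=
    fun n => (integrable_finset_sum _ fun t _ => my_integrable_comp_iterate' hTm hg1 t).const_mul _
  have hint_eq : ∀ n : ℕ, 1 ≤ n →
      ∫ ω, ((1/(n:ℝ)) * ∑ t ∈ range n, g (T^[t] ω)) ∂μ = ∫ x, g x ∂μ := by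
    intro n hn
    rw [integral_const_mul, integral_finset_sum _ (fun t _ => my_integrable_comp_iterate' hTm hg1 t)]
    rw [Finset.sum_congr rfl (fun t _ => my_integral_comp_iterate' hTm g hg1.1 t)]
    rw [Finset.sum_const, card_range, nsmul_eq_mul, one_div, ← mul_assoc,
      inv_mul_cancel₀ (Nat.cast_ne_zero.2 (by omega)), one_mul]
  have hc_eq : c = ∫ x, g x ∂μ := by
    have hle : ∀ᶠ n : ℕ in atTop, |(∫ x, g x ∂μ) - c|
        ≤ ∫ ω, |(1/(n:ℝ)) * ∑ t ∈ range n, g (T^[t] ω) - c| ∂μ := by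
      filter_upwards [eventually_ge_atTop 1] with n hn
      have h1 : (∫ x, g x ∂μ) - c
          = ∫ ω, ((1/(n:ℝ)) * ∑ t ∈ range n, g (T^[t] ω) - c) ∂μ := by
        rw [integral_sub (hAint n) (integrable_const c), integral_const, probReal_univ, one_smul, hint_eq n hn]
      rw [h1]
      simpa [Real.norm_eq_abs] using
        norm_integral_le_integral_norm (fun ω => (1/(n:ℝ)) * ∑ t ∈ range n, g (T^[t] ω) - c) (μ := μ)
    have h0 : |(∫ x, g x ∂μ) - c| ≤ 0 := ge_of_tendsto hIc hle
    have := abs_nonneg ((∫ x, g x ∂μ) - c)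
    have : (∫ x, g x ∂μ) - c = 0 := abs_eq_zero.1 (le_antisymm h0 this)
    linarith
  rw [hc_eq] at hIc
  exact hIc



lemma my_exists_L2_approx [IsProbabilityMeasure μ] (g : Ω → ℝ) (hg : Integrable g μ)
    {ε : ℝ} (hε : 0 < ε) :
    ∃ h : Ω → ℝ, MemLp h 2 μ ∧ Integrable h μ ∧ ∫ ω, |g ω - h ω| ∂μ < ε := by
  set F : ℕ → Ω → ℝ := fun k ω => max (-(k:ℝ)) (min (k:ℝ) (g ω)) with hF
  have hFm : ∀ k, AEStronglyMeasurable (F k) μ := fun k =>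
    (continuous_const.max (continuous_const.min continuous_id)).comp_aestronglyMeasurable hg.1
  have hF2 : ∀ k, MemLp (F k) 2 μ := by
    intro k
    refine MemLp.of_bound (hFm k) (k:ℝ) (ae_of_all _ fun ω => ?_)
    rw [Real.norm_eq_abs, abs_le]
    constructor
    · exact le_max_left _ _
    · exact max_le ((neg_nonpos.2 (Nat.cast_nonneg k)).trans (Nat.cast_nonneg k))
        (min_le_left _ _)
  have hFle : ∀ k ω, |F k ω| ≤ |g ω| := by
    intro k ω
    rw [abs_le]
    constructor
    · exact le_max_of_le_right (le_min
        ((neg_nonpos.2 (abs_nonneg _)).trans (Nat.cast_nonneg k)) (neg_abs_le _))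
    · exact max_le ((neg_nonpos.2 (Nat.cast_nonneg k)).trans (abs_nonneg _))
        ((min_le_right _ _).trans (le_abs_self _))
  have hFi : ∀ k, Integrable (F k) μ := fun k => (hF2 k).integrable one_le_two
  have htend : Tendsto (fun k => ∫ ω, |g ω - F k ω| ∂μ) atTop (𝓝 0) := by
    have h0 : (0:ℝ) = ∫ (_ : Ω), (0:ℝ) ∂μ := by simp
    rw [h0]
    refine tendsto_integral_of_dominated_convergence (fun ω => 2 * |g ω|)
      (fun k => (hg.sub (hFi k)).abs.aestronglyMeasurable) (hg.abs.const_mul 2)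
      (fun k => ae_of_all _ fun ω => ?_) (ae_of_all _ fun ω => ?_)
    · rw [Real.norm_eq_abs, abs_abs, sub_eq_add_neg]
      refine (abs_add_le _ _).trans ?_
      rw [abs_neg]
      show |g ω| + |F k ω| ≤ 2 * |g ω|
      linarith [hFle k ω]
    · obtain ⟨N, hN⟩ := exists_nat_ge |g ω|
      refine tendsto_atTop_of_eventually_const (i₀ := N) fun k hk => ?_
      have hkN : (N:ℝ) ≤ (k:ℝ) := Nat.cast_le.2 hk
      have h1 : min (k:ℝ) (g ω) = g ω :=
        min_eq_right (((le_abs_self _).trans hN).trans hkN)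
      have h2 : max (-(k:ℝ)) (g ω) = g ω := by
        refine max_eq_right ?_
        have : -(k:ℝ) ≤ -|g ω| := by
          refine neg_le_neg (hN.trans hkN)
        exact this.trans (neg_abs_le _)
      simp only [hF, h1, h2, sub_self, abs_zero]
  obtain ⟨k, hk⟩ := (htend.eventually (gt_mem_nhds hε)).exists
  exact ⟨F k, hF2 k, hFi k, hk⟩

end MeanErgodicAux

lemma my_meanErgodic_L1 {Ω : Type*} [MeasurableSpace Ω] {μ : Measure Ω} {T : Ω → Ω}
    [IsProbabilityMeasure μ] (hT : Ergodic T μ) (g : Ω → ℝ) (hg : Integrable g μ) :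
    Tendsto (fun n : ℕ => ∫ ω, |(1/(n:ℝ)) * ∑ t ∈ range n, g (T^[t] ω) - ∫ x, g x ∂μ| ∂μ)
      atTop (𝓝 0) := by
  have hTm := hT.toMeasurePreserving
  rw [Metric.tendsto_atTop]
  intro ε hε
  obtain ⟨h, hh2, hhint, hclose⟩ := my_exists_L2_approx g hg (by positivity : 0 < ε/4)
  have hmain := my_meanErgodic_L2 hT h hh2
  rw [Metric.tendsto_atTop] at hmain
  obtain ⟨N, hN⟩ := hmain (ε/4) (by positivity)
  refine ⟨N, fun n hn => ?_⟩
  have hInt_gh : Integrable (fun ω => g ω - h ω) μ := hg.sub hhint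
  have hI1 : Integrable (fun ω => (1/(n:ℝ)) * ∑ t ∈ range n, (g (T^[t] ω) - h (T^[t] ω))) μ :=
    (integrable_finset_sum _ fun t _ =>
      my_integrable_comp_iterate' hTm hInt_gh t).const_mul _
  have hI2 : Integrable (fun ω => (1/(n:ℝ)) * ∑ t ∈ range n, h (T^[t] ω) - ∫ x, h x ∂μ) μ :=
    ((integrable_finset_sum _ fun t _ =>
      my_integrable_comp_iterate' hTm hhint t).const_mul _).sub (integrable_const _)
  set c3 : ℝ := (∫ x, h x ∂μ) - ∫ x, g x ∂μ with hc3
  have hdecomp : ∀ ω, (1/(n:ℝ)) * ∑ t ∈ range n, g (T^[t] ω) - ∫ x, g x ∂μ =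
      ((1/(n:ℝ)) * ∑ t ∈ range n, (g (T^[t] ω) - h (T^[t] ω)))
        + ((1/(n:ℝ)) * ∑ t ∈ range n, h (T^[t] ω) - ∫ x, h x ∂μ) + c3 := by
    intro ω
    rw [hc3, Finset.sum_sub_distrib, mul_sub]
    ring
  have hsplit : ∫ ω, |(1/(n:ℝ)) * ∑ t ∈ range n, g (T^[t] ω) - ∫ x, g x ∂μ| ∂μ
      ≤ (∫ ω, |(1/(n:ℝ)) * ∑ t ∈ range n, (g (T^[t] ω) - h (T^[t] ω))| ∂μ)
        + (∫ ω, |(1/(n:ℝ)) * ∑ t ∈ range n, h (T^[t] ω) - ∫ x, h x ∂μ| ∂μ) + |c3| := by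
    have heq : ∫ ω, |(1/(n:ℝ)) * ∑ t ∈ range n, g (T^[t] ω) - ∫ x, g x ∂μ| ∂μ
        = ∫ ω, |((1/(n:ℝ)) * ∑ t ∈ range n, (g (T^[t] ω) - h (T^[t] ω)))
            + ((1/(n:ℝ)) * ∑ t ∈ range n, h (T^[t] ω) - ∫ x, h x ∂μ) + c3| ∂μ := by
      refine integral_congr_ae (ae_of_all _ fun ω => ?_)
      exact congrArg abs (hdecomp ω)
    rw [heq]
    have hmono : ∫ ω, |((1/(n:ℝ)) * ∑ t ∈ range n, (g (T^[t] ω) - h (T^[t] ω)))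
            + ((1/(n:ℝ)) * ∑ t ∈ range n, h (T^[t] ω) - ∫ x, h x ∂μ) + c3| ∂μ
        ≤ ∫ ω, (|(1/(n:ℝ)) * ∑ t ∈ range n, (g (T^[t] ω) - h (T^[t] ω))|
            + |(1/(n:ℝ)) * ∑ t ∈ range n, h (T^[t] ω) - ∫ x, h x ∂μ| + |c3|) ∂μ := by
      refine integral_mono ((hI1.add hI2).add (integrable_const c3)).abs
        ((hI1.abs.add hI2.abs).add (integrable_const _)) (fun ω => ?_)
      exact (abs_add_le _ _).trans (add_le_add_left (abs_add_le _ _) _)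
    have e1 : Integrable (fun ω => |(1/(n:ℝ)) * ∑ t ∈ range n, (g (T^[t] ω) - h (T^[t] ω))|
        + |(1/(n:ℝ)) * ∑ t ∈ range n, h (T^[t] ω) - ∫ x, h x ∂μ|) μ := hI1.abs.add hI2.abs
    refine hmono.trans (le_of_eq ?_)
    rw [integral_add e1 (integrable_const _),
      integral_add hI1.abs hI2.abs, integral_const, probReal_univ, one_smul]
  have hterm1 : ∫ ω, |(1/(n:ℝ)) * ∑ t ∈ range n, (g (T^[t] ω) - h (T^[t] ω))| ∂μ
      ≤ ∫ ω, |g ω - h ω| ∂μ := my_avg_bound hTm _ hInt_gh n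
  have hterm2 : ∫ ω, |(1/(n:ℝ)) * ∑ t ∈ range n, h (T^[t] ω) - ∫ x, h x ∂μ| ∂μ < ε/4 := by
    have := hN n hn
    rwa [Real.dist_eq, sub_zero,
      abs_of_nonneg (integral_nonneg fun ω => abs_nonneg _)] at this
  have hterm3 : |c3| ≤ ∫ ω, |g ω - h ω| ∂μ := by
    rw [hc3, ← integral_sub hhint hg]
    have h1 := norm_integral_le_integral_norm (fun ω => h ω - g ω) (μ := μ)
    simp only [Real.norm_eq_abs] at h1
    refine h1.trans (le_of_eq (integral_congr_ae (ae_of_all _ fun ω => ?_)))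
    exact abs_sub_comm _ _
  have hnn : 0 ≤ ∫ ω, |(1/(n:ℝ)) * ∑ t ∈ range n, g (T^[t] ω) - ∫ x, g x ∂μ| ∂μ :=
    integral_nonneg fun ω => abs_nonneg _
  rw [Real.dist_eq, sub_zero, abs_of_nonneg hnn]
  calc ∫ ω, |(1/(n:ℝ)) * ∑ t ∈ range n, g (T^[t] ω) - ∫ x, g x ∂μ| ∂μ
      ≤ (∫ ω, |(1/(n:ℝ)) * ∑ t ∈ range n, (g (T^[t] ω) - h (T^[t] ω))| ∂μ)
        + (∫ ω, |(1/(n:ℝ)) * ∑ t ∈ range n, h (T^[t] ω) - ∫ x, h x ∂μ| ∂μ) + |c3| := hsplit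
    _ < ε/4 + ε/4 + ε/4 := by
        have := lt_of_le_of_lt hterm1 hclose
        have := lt_of_le_of_lt hterm3 hclose
        gcongr
    _ < ε := by linarith

/-- Generalized mean ergodic theorem: if `gₜ → g` in `L¹(μ)` and `T` is ergodic,
then the Cesàro averages `(1/n) ∑_{t<n} gₜ ∘ T^t` converge to `∫ g` in `L¹(μ)`. -/
theorem stmt_0 {Ω : Type*} [MeasurableSpace Ω] (μ : Measure Ω) [IsProbabilityMeasure μ]
    (T : Ω → Ω) (hT : Ergodic T μ)
    (g : Ω → ℝ) (gs : ℕ → Ω → ℝ)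
    (hg : Integrable g μ) (hgs : ∀ t, Integrable (gs t) μ)
    (hconv : Tendsto (fun t => ∫ ω, |gs t ω - g ω| ∂μ) atTop (nhds 0)) :
    Tendsto (fun n : ℕ => ∫ ω,
        |(1 / (n : ℝ)) * ∑ t ∈ Finset.range n, gs t (T^[t] ω) - ∫ x, g x ∂μ| ∂μ)
      atTop (nhds 0) := by
  have hTm := hT.toMeasurePreserving
  have hdiff : ∀ t, Integrable (fun ω => gs t ω - g ω) μ := fun t => (hgs t).sub hg
  have hbound : ∀ n : ℕ, ∫ ω,
        |(1 / (n : ℝ)) * ∑ t ∈ Finset.range n, gs t (T^[t] ω) - ∫ x, g x ∂μ| ∂μ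
      ≤ ((1/(n:ℝ)) * ∑ t ∈ range n, ∫ ω, |gs t ω - g ω| ∂μ)
        + ∫ ω, |(1/(n:ℝ)) * ∑ t ∈ range n, g (T^[t] ω) - ∫ x, g x ∂μ| ∂μ := by
    intro n
    have hI1 : Integrable (fun ω => (1/(n:ℝ)) * ∑ t ∈ range n, (gs t (T^[t] ω) - g (T^[t] ω))) μ :=
      (integrable_finset_sum _ fun t _ =>
        my_integrable_comp_iterate' hTm (hdiff t) t).const_mul _
    have hI2 : Integrable (fun ω => (1/(n:ℝ)) * ∑ t ∈ range n, g (T^[t] ω) - ∫ x, g x ∂μ) μ :=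
      ((integrable_finset_sum _ fun t _ =>
        my_integrable_comp_iterate' hTm hg t).const_mul _).sub (integrable_const _)
    have hdecomp : ∀ ω, (1 / (n : ℝ)) * ∑ t ∈ Finset.range n, gs t (T^[t] ω) - ∫ x, g x ∂μ
        = ((1/(n:ℝ)) * ∑ t ∈ range n, (gs t (T^[t] ω) - g (T^[t] ω)))
          + ((1/(n:ℝ)) * ∑ t ∈ range n, g (T^[t] ω) - ∫ x, g x ∂μ) := by
      intro ω
      rw [Finset.sum_sub_distrib, mul_sub]
      ring
    have heq : ∫ ω, |(1 / (n : ℝ)) * ∑ t ∈ Finset.range n, gs t (T^[t] ω) - ∫ x, g x ∂μ| ∂μ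
        = ∫ ω, |((1/(n:ℝ)) * ∑ t ∈ range n, (gs t (T^[t] ω) - g (T^[t] ω)))
          + ((1/(n:ℝ)) * ∑ t ∈ range n, g (T^[t] ω) - ∫ x, g x ∂μ)| ∂μ := by
      refine integral_congr_ae (ae_of_all _ fun ω => ?_)
      exact congrArg abs (hdecomp ω)
    rw [heq]
    have hmono : ∫ ω, |((1/(n:ℝ)) * ∑ t ∈ range n, (gs t (T^[t] ω) - g (T^[t] ω)))
          + ((1/(n:ℝ)) * ∑ t ∈ range n, g (T^[t] ω) - ∫ x, g x ∂μ)| ∂μ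
        ≤ ∫ ω, (|(1/(n:ℝ)) * ∑ t ∈ range n, (gs t (T^[t] ω) - g (T^[t] ω))|
          + |(1/(n:ℝ)) * ∑ t ∈ range n, g (T^[t] ω) - ∫ x, g x ∂μ|) ∂μ := by
      refine integral_mono (hI1.add hI2).abs (hI1.abs.add hI2.abs) (fun ω => abs_add_le _ _)
    refine hmono.trans ?_
    rw [integral_add hI1.abs hI2.abs]
    gcongr
    exact my_avg_bound_family hTm (fun t ω => gs t ω - g ω) hdiff n
  have hces : Tendsto (fun n : ℕ => (1/(n:ℝ)) * ∑ t ∈ range n, ∫ ω, |gs t ω - g ω| ∂μ)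
      atTop (𝓝 0) := by
    have := hconv.cesaro
    simpa [one_div] using this
  have hme := my_meanErgodic_L1 hT g hg
  have hsum0 : Tendsto (fun n : ℕ => ((1/(n:ℝ)) * ∑ t ∈ range n, ∫ ω, |gs t ω - g ω| ∂μ)
      + ∫ ω, |(1/(n:ℝ)) * ∑ t ∈ range n, g (T^[t] ω) - ∫ x, g x ∂μ| ∂μ) atTop (𝓝 0) := by
    simpa using hces.add hme
  exact squeeze_zero (fun n => integral_nonneg fun ω => abs_nonneg _) hbound hsum0
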